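/- Let 1 < p < 2 and let W₁, W₂ ∈ R^{d×d} with ‖W₁‖_{p,p} = ‖W₂‖_{p,p} = 1. Let ψ(W) = (1/p)‖W‖_{p,p}^p and D_ψ the associated Bregman divergence. Then D_ψ(W₁, W₂) ≥ ((p-1)²/p) ‖W₁ − W₂‖_{2,2}². -/

import Mathlib

open Real Finset

/-- Entrywise `ℓ_{p,p}` norm of a `d × d` real matrix. -/
noncomputable def mpnorm {d : ℕ} (p : ℝ) (W : Fin d → Fin d → ℝ) : ℝ :=
  (∑ i, ∑ j, |W i j| ^ p) ^ (1 / p)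

/-- Trace inner product `⟨A, B⟩ = trace(Aᵀ B) = ∑_{i,j} A_{ij} B_{ij}`. -/
def mInner {d : ℕ} (A B : Fin d → Fin d → ℝ) : ℝ := ∑ i, ∑ j, A i j * B i j

/-- The potential `ψ(W) = (1/p) ‖W‖_{p,p}^p`. -/
noncomputable def psiP {d : ℕ} (p : ℝ) (W : Fin d → Fin d → ℝ) : ℝ :=
  (1 / p) * mpnorm p W ^ p

/-- The gradient of `ψ`, with entries `sign(V_{ij}) |V_{ij}|^{p-1}`. -/
noncomputable def gradPsi {d : ℕ} (p : ℝ) (V : Fin d → Fin d → ℝ) : Fin d → Fin d → ℝ :=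
  fun i j => Real.sign (V i j) * |V i j| ^ (p - 1)

/-- The Bregman divergence `D_ψ(W, V) = ψ(W) − ψ(V) − ⟨∇ψ(V), W − V⟩`. -/
noncomputable def DpsiP {d : ℕ} (p : ℝ) (W V : Fin d → Fin d → ℝ) : ℝ :=
  psiP p W - psiP p V - mInner (gradPsi p V) (W - V)

-- concavity tangent bound via Bernoulli
lemma key_concave {p : ℝ} (hp1 : 1 < p) (hp2 : p < 2) {u v : ℝ} (hu : 0 ≤ u) (huv : u ≤ v) :
    (p - 1) * v ^ (p - 2) * (v - u) ≤ v ^ (p - 1) - u ^ (p - 1) := by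
  rcases (hu.trans huv).eq_or_lt with hv | hv
  · have hu0 : u = 0 := le_antisymm (hv ▸ huv) hu
    simp [hu0, ← hv]
  · have hvne : v ≠ 0 := hv.ne'
    have hw0 : 0 ≤ u / v := div_nonneg hu hv.le
    have hb : (u / v) ^ (p - 1) ≤ 1 + (p - 1) * (u / v - 1) := by
      have h := rpow_one_add_le_one_add_mul_self (s := u / v - 1)
        (by linarith) (by linarith : (0:ℝ) ≤ p - 1) (by linarith)
      simpa using h
    have hus : u ^ (p - 1) = v ^ (p - 1) * (u / v) ^ (p - 1) := by
      rw [← Real.mul_rpow hv.le hw0]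
      congr 1
      field_simp
    have hpow : v ^ (p - 1) * (u / v) = v ^ (p - 2) * u := by
      rw [show p - 1 = (p - 2) + 1 by ring, Real.rpow_add_one hvne]
      field_simp
    have hvv : v ^ (p - 2) * v = v ^ (p - 1) := by
      rw [show p - 1 = (p - 2) + 1 by ring, Real.rpow_add_one hvne]
    have hmul : v ^ (p - 1) * ((u / v) ^ (p - 1)) ≤ v ^ (p - 1) * (1 + (p - 1) * (u / v - 1)) :=
      mul_le_mul_of_nonneg_left hb (Real.rpow_nonneg hv.le _)
    nlinarith [hmul, hus, hpow, hvv]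

lemma sq_mul_rpow_le {p : ℝ} (hp1 : 1 < p) (hp2 : p < 2) {t M : ℝ}
    (ht : 0 ≤ t) (htM : t ≤ M) : t ^ 2 * M ^ (p - 2) ≤ t ^ p := by
  rcases ht.eq_or_lt with h0 | h0
  · simp [← h0, Real.zero_rpow (show p ≠ 0 by linarith)]
  · have h1 : M ^ (p - 2) ≤ t ^ (p - 2) :=
      Real.rpow_le_rpow_of_nonpos h0 htM (by linarith)
    have h2 : t ^ 2 * t ^ (p - 2) = t ^ p := by
      rw [← Real.rpow_natCast t 2, ← Real.rpow_add h0]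
      congr 1
      push_cast; ring
    calc t ^ 2 * M ^ (p - 2) ≤ t ^ 2 * t ^ (p - 2) :=
          mul_le_mul_of_nonneg_left h1 (by positivity)
      _ = t ^ p := h2

lemma mul_rpow_le' {p : ℝ} (hp1 : 1 < p) (hp2 : p < 2) {t M : ℝ}
    (ht : 0 ≤ t) (htM : t ≤ M) : t * M ^ (p - 2) ≤ t ^ (p - 1) := by
  rcases ht.eq_or_lt with h0 | h0
  · simp [← h0, Real.zero_rpow (show p - 1 ≠ 0 by linarith)]
  · have h1 : M ^ (p - 2) ≤ t ^ (p - 2) :=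
      Real.rpow_le_rpow_of_nonpos h0 htM (by linarith)
    have h2 : t * t ^ (p - 2) = t ^ (p - 1) := by
      nth_rewrite 1 [← Real.rpow_one t]
      rw [← Real.rpow_add h0]
      congr 1
      ring
    calc t * M ^ (p - 2) ≤ t * t ^ (p - 2) :=
          mul_le_mul_of_nonneg_left h1 ht
      _ = t ^ (p - 1) := h2

lemma real_add_rpow {x y r : ℝ} (hx : 0 ≤ x) (hy : 0 ≤ y) (hr : 1 ≤ r) :
    x ^ r + y ^ r ≤ (x + y) ^ r := by
  lift x to NNReal using hx
  lift y to NNReal using hy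
  have h := NNReal.add_rpow_le_rpow_add x y hr
  have := NNReal.coe_le_coe.2 h
  push_cast at this
  exact_mod_cast this

lemma sum_rpow_le_rpow_sum {ι : Type*} (s : Finset ι) (f : ι → ℝ) (hf : ∀ i, 0 ≤ f i)
    {r : ℝ} (hr : 1 ≤ r) : ∑ i ∈ s, f i ^ r ≤ (∑ i ∈ s, f i) ^ r := by
  induction s using Finset.cons_induction with
  | empty => simp [Real.zero_rpow (show r ≠ 0 by linarith)]
  | cons a s ha ih =>
    rw [Finset.sum_cons, Finset.sum_cons]
    have h1 : f a ^ r + ∑ i ∈ s, f i ^ r ≤ f a ^ r + (∑ i ∈ s, f i) ^ r := by linarith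
    exact h1.trans (real_add_rpow (hf a) (Finset.sum_nonneg fun i _ => hf i) hr)

lemma numeric_bound {p : ℝ} (hp1 : 1 < p) (hp2 : p < 2) :
    2 * (p - 1) / p * (2:ℝ) ^ ((2 - p) / p) ≤ 1 := by
  have hp0 : (0:ℝ) < p := by linarith
  set r : ℝ := (2 - p) / p with hr
  have hr0 : 0 ≤ r := div_nonneg (by linarith) hp0.le
  have heq : 2 * (p - 1) / p = 1 - r := by
    rw [hr]; field_simp; ring
  rw [heq]
  have h2r : (2:ℝ) ^ r = Real.exp (Real.log 2 * r) := by
    rw [Real.rpow_def_of_pos (by norm_num)]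
  have hlog2 : Real.log 2 ≤ 1 := by
    have := Real.log_le_sub_one_of_pos (show (0:ℝ) < 2 by norm_num)
    linarith
  have h3 : Real.exp (Real.log 2 * r) ≤ Real.exp r := by
    apply Real.exp_le_exp.mpr
    nlinarith
  have h4 : 1 - r ≤ Real.exp (-r) := by
    have := Real.add_one_le_exp (-r)
    linarith
  rcases le_or_gt (1 - r) 0 with h5 | h5
  · have : 0 < (2:ℝ) ^ r := Real.rpow_pos_of_pos (by norm_num) r
    nlinarith
  · calc (1 - r) * (2:ℝ) ^ r = (1 - r) * Real.exp (Real.log 2 * r) := by rw [h2r]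
      _ ≤ (1 - r) * Real.exp r := mul_le_mul_of_nonneg_left h3 h5.le
      _ ≤ Real.exp (-r) * Real.exp r := mul_le_mul_of_nonneg_right h4 (Real.exp_pos r).le
      _ = 1 := by rw [← Real.exp_add]; simp

lemma bregman_scalar_nonneg {p : ℝ} (hp1 : 1 < p) (hp2 : p < 2) {x y M : ℝ}
    (hx : 0 ≤ x) (hy : 0 ≤ y) (hxM : x ≤ M) (hyM : y ≤ M) :
    (p - 1) * M ^ (p - 2) / 2 * (x - y) ^ 2 ≤
      x ^ p / p - y ^ p / p - y ^ (p - 1) * (x - y) := by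
  have hp0 : (0:ℝ) < p := by linarith
  have hder : ∀ z : ℝ, HasDerivAt
      (fun w : ℝ => w ^ p / p - y ^ (p - 1) * w - (p - 1) * M ^ (p - 2) / 2 * (w - y) ^ 2)
      (z ^ (p - 1) - y ^ (p - 1) - (p - 1) * M ^ (p - 2) * (z - y)) z := by
    intro z
    have h1 : HasDerivAt (fun w : ℝ => w ^ p) (p * z ^ (p - 1)) z :=
      Real.hasDerivAt_rpow_const (Or.inr hp1.le)
    have h2 : HasDerivAt (fun w : ℝ => (w - y) ^ 2) (2 * (z - y)) z := by
      have h := ((hasDerivAt_id z).sub_const y).pow 2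
      simp at h
      exact h
    have h3 : HasDerivAt (fun w : ℝ => y ^ (p - 1) * w) (y ^ (p - 1)) z := by
      simpa using (hasDerivAt_id z).const_mul (y ^ (p - 1))
    have h4 := ((h1.div_const p).sub h3).sub (h2.const_mul ((p - 1) * M ^ (p - 2) / 2))
    refine HasDerivAt.congr_deriv h4 ?_
    rw [mul_div_cancel_left₀ _ hp0.ne']
    ring
  have hdiff : Differentiable ℝ
      (fun w : ℝ => w ^ p / p - y ^ (p - 1) * w - (p - 1) * M ^ (p - 2) / 2 * (w - y) ^ 2) :=
    fun z => (hder z).differentiableAt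
  rcases lt_trichotomy x y with hlt | heq | hgt
  · have hanti : AntitoneOn
        (fun w : ℝ => w ^ p / p - y ^ (p - 1) * w - (p - 1) * M ^ (p - 2) / 2 * (w - y) ^ 2)
        (Set.Icc x y) := by
      apply antitoneOn_of_deriv_nonpos (convex_Icc x y) hdiff.continuous.continuousOn
        hdiff.differentiableOn
      intro z hz
      rw [interior_Icc] at hz
      rw [(hder z).deriv]
      have hz0 : 0 ≤ z := le_trans hx hz.1.le
      have hy0 : 0 < y := lt_of_le_of_lt hz0 hz.2
      have hM2 : M ^ (p - 2) ≤ y ^ (p - 2) :=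
        Real.rpow_le_rpow_of_nonpos hy0 hyM (by linarith)
      have hkey := key_concave hp1 hp2 hz0 hz.2.le
      have hzy : (0:ℝ) ≤ y - z := by linarith [hz.2.le]
      have hmm := mul_le_mul_of_nonneg_right hM2 hzy
      have hmm2 := mul_le_mul_of_nonneg_left hmm (show (0:ℝ) ≤ p - 1 by linarith)
      nlinarith [hkey, hmm2]
    have h2 := hanti (Set.left_mem_Icc.mpr hlt.le) (Set.right_mem_Icc.mpr hlt.le) hlt.le
    simp only at h2
    nlinarith [h2]
  · subst heq
    simp
  · have hmono : MonotoneOn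
        (fun w : ℝ => w ^ p / p - y ^ (p - 1) * w - (p - 1) * M ^ (p - 2) / 2 * (w - y) ^ 2)
        (Set.Icc y x) := by
      apply monotoneOn_of_deriv_nonneg (convex_Icc y x) hdiff.continuous.continuousOn
        hdiff.differentiableOn
      intro z hz
      rw [interior_Icc] at hz
      rw [(hder z).deriv]
      have hz0 : 0 < z := lt_of_le_of_lt hy hz.1
      have hM2 : M ^ (p - 2) ≤ z ^ (p - 2) :=
        Real.rpow_le_rpow_of_nonpos hz0 (le_trans hz.2.le hxM) (by linarith)
      have hkey := key_concave hp1 hp2 hy hz.1.le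
      have hzy : (0:ℝ) ≤ z - y := by linarith [hz.1.le]
      have hmm := mul_le_mul_of_nonneg_right hM2 hzy
      have hmm2 := mul_le_mul_of_nonneg_left hmm (show (0:ℝ) ≤ p - 1 by linarith)
      nlinarith [hkey, hmm2]
    have h2 := hmono (Set.left_mem_Icc.mpr hgt.le) (Set.right_mem_Icc.mpr hgt.le) hgt.le
    simp only at h2
    nlinarith [h2]

lemma bregman_scalar {p : ℝ} (hp1 : 1 < p) (hp2 : p < 2) (x y : ℝ) :
    (p - 1) * (max |x| |y|) ^ (p - 2) / 2 * (x - y) ^ 2 ≤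
      |x| ^ p / p - |y| ^ p / p - Real.sign y * |y| ^ (p - 1) * (x - y) := by
  have hp0 : (0:ℝ) < p := by linarith
  suffices H : ∀ x y : ℝ, 0 ≤ y →
      (p - 1) * (max |x| |y|) ^ (p - 2) / 2 * (x - y) ^ 2 ≤
        |x| ^ p / p - |y| ^ p / p - Real.sign y * |y| ^ (p - 1) * (x - y) by
    rcases le_or_gt 0 y with hy | hy
    · exact H x y hy
    · have h := H (-x) (-y) (by linarith)
      simp only [abs_neg, Real.sign_neg] at h
      have e2 : (-x - -y) ^ 2 = (x - y) ^ 2 := by ring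
      have e3 : -Real.sign y * |y| ^ (p - 1) * (-x - -y) =
          Real.sign y * |y| ^ (p - 1) * (x - y) := by ring
      rw [e2, e3] at h
      exact h
  intro x y hy
  have hsign : Real.sign y * |y| ^ (p - 1) = y ^ (p - 1) := by
    rcases hy.eq_or_lt with h0 | h0
    · rw [← h0, Real.sign_zero, zero_mul]
      exact (Real.zero_rpow (show p - 1 ≠ 0 by linarith)).symm
    · rw [Real.sign_of_pos h0, abs_of_pos h0, one_mul]
  rw [hsign]
  rcases le_or_gt 0 x with hx | hx
  · rw [abs_of_nonneg hx, abs_of_nonneg hy]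
    exact bregman_scalar_nonneg hp1 hp2 hx hy (le_max_left x y) (le_max_right x y)
  · rw [abs_of_neg hx, abs_of_nonneg hy]
    have hA : (0:ℝ) < -x := by linarith
    have hAM : -x ≤ max (-x) y := le_max_left _ _
    have hyM : y ≤ max (-x) y := le_max_right _ _
    have hM0 : (0:ℝ) < max (-x) y := lt_of_lt_of_le hA hAM
    have hP : (0:ℝ) ≤ (max (-x) y) ^ (p - 2) := Real.rpow_nonneg hM0.le _
    have hX : (0:ℝ) ≤ (-x) ^ p := Real.rpow_nonneg hA.le p
    have hYp : (0:ℝ) ≤ y ^ p := Real.rpow_nonneg hy p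
    have f1 : (-x) ^ 2 * (max (-x) y) ^ (p - 2) ≤ (-x) ^ p :=
      sq_mul_rpow_le hp1 hp2 hA.le hAM
    have f2 : y ^ 2 * (max (-x) y) ^ (p - 2) ≤ y ^ p :=
      sq_mul_rpow_le hp1 hp2 hy hyM
    have f3 : y * (max (-x) y) ^ (p - 2) ≤ y ^ (p - 1) :=
      mul_rpow_le' hp1 hp2 hy hyM
    have f4 : y ^ (p - 1) * y = y ^ p := by
      rcases hy.eq_or_lt with h0 | h0
      · rw [← h0]
        simp [Real.zero_rpow (show p ≠ 0 by linarith)]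
      · have hh := Real.rpow_add_one h0.ne' (p - 1)
        rw [show p - 1 + 1 = p by ring] at hh
        exact hh.symm
    have c1 : (p - 1) / 2 * ((-x) ^ 2 * (max (-x) y) ^ (p - 2)) ≤ (-x) ^ p / p := by
      have hXp : (p - 1) / 2 * (-x) ^ p ≤ (-x) ^ p / p := by
        rw [le_div_iff₀ hp0]
        have hint : 0 ≤ (-x) ^ p * (2 - (p - 1) * p) := by
          apply mul_nonneg hX
          nlinarith [mul_nonneg (show (0:ℝ) ≤ 2 - p by linarith)
            (show (0:ℝ) ≤ p + 1 by linarith)]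
        nlinarith [hint]
      exact (mul_le_mul_of_nonneg_left f1 (show (0:ℝ) ≤ (p - 1) / 2 by linarith)).trans hXp
    have c2 : (p - 1) / 2 * (y ^ 2 * (max (-x) y) ^ (p - 2)) ≤ y ^ p - y ^ p / p := by
      have hYpp : (p - 1) / 2 * y ^ p ≤ y ^ p - y ^ p / p := by
        have h5 : y ^ p / p ≤ (3 - p) / 2 * y ^ p := by
          rw [div_le_iff₀ hp0]
          nlinarith [mul_nonneg (mul_nonneg (show (0:ℝ) ≤ p - 1 by linarith)
            (show (0:ℝ) ≤ 2 - p by linarith)) hYp]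
        linarith
      exact (mul_le_mul_of_nonneg_left f2 (show (0:ℝ) ≤ (p - 1) / 2 by linarith)).trans hYpp
    have c3 : (p - 1) * ((-x) * (y * (max (-x) y) ^ (p - 2))) ≤ (-x) * y ^ (p - 1) := by
      have h1 := mul_le_mul_of_nonneg_left f3 hA.le
      have hnn : (0:ℝ) ≤ (-x) * (y * (max (-x) y) ^ (p - 2)) :=
        mul_nonneg hA.le (mul_nonneg hy hP)
      nlinarith [h1, hnn]
    linarith [c1, c2, c3, f4]

lemma sum_sq_le {ι : Type*} [Fintype ι] {p : ℝ} (hp1 : 1 < p) (hp2 : p < 2) (a b : ι → ℝ)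
    (ha : ∑ i, |a i| ^ p = 1) (hb : ∑ i, |b i| ^ p = 1) :
    ∑ i, (a i - b i) ^ 2 ≤
      (2:ℝ) ^ ((2 - p) / p) * ∑ i, (max |a i| |b i|) ^ (p - 2) * (a i - b i) ^ 2 := by
  have hp0 : (0:ℝ) < p := by linarith
  have h2p : (0:ℝ) < 2 - p := by linarith
  set t : ι → ℝ := fun i => a i - b i with ht
  set M : ι → ℝ := fun i => max |a i| |b i| with hM
  set u : ι → ℝ := fun i => M i ^ (p - 2) * t i ^ 2 with hu
  have hMnn : ∀ i, 0 ≤ M i := fun i => le_trans (abs_nonneg _) (le_max_left _ _)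
  have hunn : ∀ i, 0 ≤ u i := fun i =>
    mul_nonneg (Real.rpow_nonneg (hMnn i) _) (sq_nonneg _)
  have hsu : 0 ≤ ∑ i, u i := Finset.sum_nonneg fun i _ => hunn i
  have hsM : 0 ≤ ∑ i, M i ^ p :=
    Finset.sum_nonneg fun i _ => Real.rpow_nonneg (hMnn i) _
  have hst : 0 ≤ ∑ i, |t i| ^ p :=
    Finset.sum_nonneg fun i _ => Real.rpow_nonneg (abs_nonneg _) _
  -- Step C : ∑ M^p ≤ 2
  have hC : ∑ i, M i ^ p ≤ 2 := by
    have hpoint : ∀ i, M i ^ p ≤ |a i| ^ p + |b i| ^ p := by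
      intro i
      rcases max_cases |a i| |b i| with ⟨h, _⟩ | ⟨h, _⟩ <;>
        simp only [hM, h] <;>
        [nlinarith [Real.rpow_nonneg (abs_nonneg (b i)) p];
         nlinarith [Real.rpow_nonneg (abs_nonneg (a i)) p]]
    calc ∑ i, M i ^ p ≤ ∑ i, (|a i| ^ p + |b i| ^ p) :=
          Finset.sum_le_sum fun i _ => hpoint i
      _ = 2 := by rw [Finset.sum_add_distrib, ha, hb]; norm_num
  -- Step A : pointwise identity
  have hA : ∀ i, |t i| ^ p = u i ^ (p / 2) * (M i ^ p) ^ ((2 - p) / 2) := by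
    intro i
    rcases (hMnn i).eq_or_lt with hMi | hMi
    · have hai : |a i| = 0 := le_antisymm (le_trans (le_max_left _ _) hMi.symm.le) (abs_nonneg _)
      have hbi : |b i| = 0 := le_antisymm (le_trans (le_max_right _ _) hMi.symm.le) (abs_nonneg _)
      have hti : t i = 0 := by
        rw [ht]; simp only
        rw [abs_eq_zero] at hai hbi
        rw [hai, hbi, sub_zero]
      have hui : u i = 0 := by rw [hu]; simp [hti]
      rw [hti, hui, abs_zero, Real.zero_rpow hp0.ne',
        Real.zero_rpow (show p / 2 ≠ 0 by positivity), zero_mul]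
    · have e1 : u i ^ (p / 2) = M i ^ ((p - 2) * (p / 2)) * |t i| ^ p := by
        rw [hu]
        simp only
        rw [Real.mul_rpow (Real.rpow_nonneg (hMnn i) _) (sq_nonneg _),
          ← Real.rpow_mul (hMnn i)]
        congr 1
        rw [← sq_abs, ← Real.rpow_natCast |t i| 2, ← Real.rpow_mul (abs_nonneg _)]
        congr 1
        push_cast
        field_simp
      have e2 : (M i ^ p) ^ ((2 - p) / 2) = M i ^ (p * ((2 - p) / 2)) := by
        rw [← Real.rpow_mul (hMnn i)]
      rw [e1, e2]
      rw [mul_comm (M i ^ ((p - 2) * (p / 2))) (|t i| ^ p), mul_assoc,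
        ← Real.rpow_add hMi]
      rw [show (p - 2) * (p / 2) + p * ((2 - p) / 2) = 0 by ring, Real.rpow_zero, mul_one]
  -- Step B : Hölder
  have hconj : Real.HolderConjugate (2 / p) (2 / (2 - p)) := by
    constructor
    · rw [inv_div, inv_div, ← add_div, inv_one]
      norm_num
    · exact div_pos (by norm_num) hp0
    · exact div_pos (by norm_num) h2p
  have hB : ∑ i, |t i| ^ p ≤ (∑ i, u i) ^ (p / 2) * (∑ i, M i ^ p) ^ ((2 - p) / 2) := by
    have hH := Real.inner_le_Lp_mul_Lq_of_nonneg (s := Finset.univ)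
      (f := fun i => u i ^ (p / 2)) (g := fun i => (M i ^ p) ^ ((2 - p) / 2)) hconj
      (fun i _ => Real.rpow_nonneg (hunn i) _)
      (fun i _ => Real.rpow_nonneg (Real.rpow_nonneg (hMnn i) _) _)
    have e3 : ∀ i, (u i ^ (p / 2)) ^ (2 / p) = u i := by
      intro i
      rw [← Real.rpow_mul (hunn i), show p / 2 * (2 / p) = 1 by field_simp, Real.rpow_one]
    have e4 : ∀ i, ((M i ^ p) ^ ((2 - p) / 2)) ^ (2 / (2 - p)) = M i ^ p := by
      intro i
      rw [← Real.rpow_mul (Real.rpow_nonneg (hMnn i) _),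
        show (2 - p) / 2 * (2 / (2 - p)) = 1 by field_simp, Real.rpow_one]
    simp only [e3, e4] at hH
    rw [show (1 : ℝ) / (2 / p) = p / 2 by rw [one_div_div],
      show (1 : ℝ) / (2 / (2 - p)) = (2 - p) / 2 by rw [one_div_div]] at hH
    calc ∑ i, |t i| ^ p = ∑ i, u i ^ (p / 2) * (M i ^ p) ^ ((2 - p) / 2) :=
          Finset.sum_congr rfl fun i _ => hA i
      _ ≤ _ := hH
  -- Step D : ℓ² ≤ ℓᵖ
  have hD : ∑ i, t i ^ 2 ≤ (∑ i, |t i| ^ p) ^ (2 / p) := by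
    have hpt : ∀ i, t i ^ 2 = (|t i| ^ p) ^ (2 / p) := by
      intro i
      rw [← Real.rpow_mul (abs_nonneg _), show p * (2 / p) = 2 by field_simp]
      rw [show ((2:ℝ)) = ((2:ℕ):ℝ) by norm_num, Real.rpow_natCast, sq_abs]
    calc ∑ i, t i ^ 2 = ∑ i, (|t i| ^ p) ^ (2 / p) := Finset.sum_congr rfl fun i _ => hpt i
      _ ≤ (∑ i, |t i| ^ p) ^ (2 / p) := by
          apply sum_rpow_le_rpow_sum _ _ (fun i => Real.rpow_nonneg (abs_nonneg _) _)
          rw [le_div_iff₀ hp0]; linarith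
  -- Step E : combine
  have hE : (∑ i, |t i| ^ p) ^ (2 / p) ≤ (∑ i, u i) * (2:ℝ) ^ ((2 - p) / p) := by
    have h1 : (∑ i, |t i| ^ p) ^ (2 / p) ≤
        ((∑ i, u i) ^ (p / 2) * (∑ i, M i ^ p) ^ ((2 - p) / 2)) ^ (2 / p) :=
      Real.rpow_le_rpow hst hB (by positivity)
    have h2 : ((∑ i, u i) ^ (p / 2) * (∑ i, M i ^ p) ^ ((2 - p) / 2)) ^ (2 / p) =
        (∑ i, u i) * (∑ i, M i ^ p) ^ ((2 - p) / p) := by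
      rw [Real.mul_rpow (Real.rpow_nonneg hsu _) (Real.rpow_nonneg hsM _),
        ← Real.rpow_mul hsu, ← Real.rpow_mul hsM,
        show p / 2 * (2 / p) = 1 by field_simp, Real.rpow_one,
        show (2 - p) / 2 * (2 / p) = (2 - p) / p by field_simp]
    have h3 : (∑ i, M i ^ p) ^ ((2 - p) / p) ≤ (2:ℝ) ^ ((2 - p) / p) :=
      Real.rpow_le_rpow hsM hC (by positivity)
    calc (∑ i, |t i| ^ p) ^ (2 / p) ≤ (∑ i, u i) * (∑ i, M i ^ p) ^ ((2 - p) / p) := by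
          rw [← h2]; exact h1
      _ ≤ (∑ i, u i) * (2:ℝ) ^ ((2 - p) / p) := mul_le_mul_of_nonneg_left h3 hsu
  calc ∑ i, t i ^ 2 ≤ (∑ i, |t i| ^ p) ^ (2 / p) := hD
    _ ≤ (∑ i, u i) * (2:ℝ) ^ ((2 - p) / p) := hE
    _ = (2:ℝ) ^ ((2 - p) / p) * ∑ i, u i := mul_comm _ _

/-- For `1 < p < 2` and unit `ℓ_{p,p}`-norm matrices, the Bregman divergence of
`ψ = (1/p)‖·‖_{p,p}^p` is at least `((p-1)²/p) ‖W₁ − W₂‖_{2,2}²` (Frobenius norm squared). -/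
theorem bregman_lower_bound_lt_two {d : ℕ} (p : ℝ) (hp1 : 1 < p) (hp2 : p < 2)
    (W₁ W₂ : Fin d → Fin d → ℝ) (h1 : mpnorm p W₁ = 1) (h2 : mpnorm p W₂ = 1) :
    ((p - 1) ^ 2 / p) * (∑ i, ∑ j, (W₁ i j - W₂ i j) ^ 2) ≤ DpsiP p W₁ W₂ := by
  have hp0 : (0:ℝ) < p := by linarith
  have hprod : ∀ f : Fin d → Fin d → ℝ,
      ∑ q : Fin d × Fin d, f q.1 q.2 = ∑ i, ∑ j, f i j := by
    intro f
    rw [← Finset.univ_product_univ, Finset.sum_product']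
  have hnorm : ∀ W : Fin d → Fin d → ℝ, mpnorm p W = 1 →
      ∑ q : Fin d × Fin d, |W q.1 q.2| ^ p = 1 := by
    intro W hW
    have hS : (0:ℝ) ≤ ∑ i, ∑ j, |W i j| ^ p := by positivity
    have h := congrArg (fun z : ℝ => z ^ p) hW
    simp only [mpnorm] at h
    rw [← Real.rpow_mul hS, one_div, inv_mul_cancel₀ hp0.ne', Real.rpow_one,
      Real.one_rpow] at h
    rw [hprod (fun i j => |W i j| ^ p)]
    exact h
  have hW1 := hnorm W₁ h1
  have hW2 := hnorm W₂ h2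
  have hcollapse : ∀ W : Fin d → Fin d → ℝ,
      psiP p W = (∑ q : Fin d × Fin d, |W q.1 q.2| ^ p) / p := by
    intro W
    have hS : (0:ℝ) ≤ ∑ i, ∑ j, |W i j| ^ p := by positivity
    rw [psiP, mpnorm, ← Real.rpow_mul hS, one_div, inv_mul_cancel₀ hp0.ne', Real.rpow_one,
      hprod (fun i j => |W i j| ^ p)]
    ring
  have hinner : mInner (gradPsi p W₂) (W₁ - W₂) =
      ∑ q : Fin d × Fin d,
        Real.sign (W₂ q.1 q.2) * |W₂ q.1 q.2| ^ (p - 1) * (W₁ q.1 q.2 - W₂ q.1 q.2) := by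
    rw [mInner, hprod (fun i j =>
      Real.sign (W₂ i j) * |W₂ i j| ^ (p - 1) * (W₁ i j - W₂ i j))]
    apply Finset.sum_congr rfl
    intro i _
    apply Finset.sum_congr rfl
    intro j _
    simp [gradPsi]
  have hDpsi : DpsiP p W₁ W₂ = ∑ q : Fin d × Fin d,
      (|W₁ q.1 q.2| ^ p / p - |W₂ q.1 q.2| ^ p / p -
        Real.sign (W₂ q.1 q.2) * |W₂ q.1 q.2| ^ (p - 1) * (W₁ q.1 q.2 - W₂ q.1 q.2)) := by
    rw [DpsiP, hcollapse W₁, hcollapse W₂, hinner, Finset.sum_sub_distrib,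
      Finset.sum_sub_distrib, ← Finset.sum_div, ← Finset.sum_div]
  have hDlow : (p - 1) / 2 *
      (∑ q : Fin d × Fin d,
        (max |W₁ q.1 q.2| |W₂ q.1 q.2|) ^ (p - 2) * (W₁ q.1 q.2 - W₂ q.1 q.2) ^ 2)
      ≤ DpsiP p W₁ W₂ := by
    rw [hDpsi, Finset.mul_sum]
    apply Finset.sum_le_sum
    intro q _
    have h := bregman_scalar hp1 hp2 (W₁ q.1 q.2) (W₂ q.1 q.2)
    calc (p - 1) / 2 *
        ((max |W₁ q.1 q.2| |W₂ q.1 q.2|) ^ (p - 2) * (W₁ q.1 q.2 - W₂ q.1 q.2) ^ 2)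
        = (p - 1) * (max |W₁ q.1 q.2| |W₂ q.1 q.2|) ^ (p - 2) / 2 *
            (W₁ q.1 q.2 - W₂ q.1 q.2) ^ 2 := by ring
      _ ≤ _ := h
  have hsq := sum_sq_le hp1 hp2 (fun q : Fin d × Fin d => W₁ q.1 q.2)
    (fun q : Fin d × Fin d => W₂ q.1 q.2) hW1 hW2
  have hnum := numeric_bound hp1 hp2
  have hT : (∑ i, ∑ j, (W₁ i j - W₂ i j) ^ 2) =
      ∑ q : Fin d × Fin d, (W₁ q.1 q.2 - W₂ q.1 q.2) ^ 2 :=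
    (hprod (fun i j => (W₁ i j - W₂ i j) ^ 2)).symm
  rw [hT]
  have hsU : (0:ℝ) ≤ ∑ q : Fin d × Fin d,
      (max |W₁ q.1 q.2| |W₂ q.1 q.2|) ^ (p - 2) * (W₁ q.1 q.2 - W₂ q.1 q.2) ^ 2 :=
    Finset.sum_nonneg fun q _ => mul_nonneg
      (Real.rpow_nonneg (le_trans (abs_nonneg _) (le_max_left _ _)) _) (sq_nonneg _)
  have c0 : (0:ℝ) ≤ (p - 1) ^ 2 / p := by positivity
  have s1 := mul_le_mul_of_nonneg_left hsq c0
  have s2 := mul_le_mul_of_nonneg_right hnum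
    (mul_nonneg (show (0:ℝ) ≤ (p - 1) / 2 by linarith) hsU)
  have e : 2 * (p - 1) / p * (2:ℝ) ^ ((2 - p) / p) *
      ((p - 1) / 2 * ∑ q : Fin d × Fin d,
        (max |W₁ q.1 q.2| |W₂ q.1 q.2|) ^ (p - 2) * (W₁ q.1 q.2 - W₂ q.1 q.2) ^ 2) =
      (p - 1) ^ 2 / p * ((2:ℝ) ^ ((2 - p) / p) * ∑ q : Fin d × Fin d,
        (max |W₁ q.1 q.2| |W₂ q.1 q.2|) ^ (p - 2) * (W₁ q.1 q.2 - W₂ q.1 q.2) ^ 2) := by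
    ring
  rw [e, one_mul] at s2
  exact le_trans (le_trans s1 s2) hDlow
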